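/- Let 𝐚 be an infinite word over a finite alphabet such that the difference p(𝐚,n) − n is bounded as n ranges over the positive integers. Then the Diophantine exponent of 𝐚 satisfies dio(𝐚) > 2. -/

import Mathlib

open Filter

noncomputable section

/-- The `j`-th digit (j ≥ 1) of the base-`b` expansion of the fractional part of `ξ`. -/
def digit (b : ℕ) (ξ : ℝ) (j : ℕ) : ℕ := (⌊Int.fract ξ * (b : ℝ) ^ j⌋ % (b : ℤ)).toNat

/-- The digit sequence `a₁ a₂ a₃ ⋯` of the base-`b` expansion of `ξ` (index `n` gives `a_{n+1}`). -/
def digitSeq (b : ℕ) (ξ : ℝ) (n : ℕ) : ℕ := digit b ξ (n + 1)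

/-- Subword complexity of an infinite word. -/
def wordComplexity {A : Type*} (a : ℕ → A) (n : ℕ) : ℕ :=
  Set.ncard {w : Fin n → A | ∃ j : ℕ, ∀ i : Fin n, w i = a (j + i)}

/-- Subword complexity `p(ξ, b, n)` of the base-`b` expansion of `ξ`. -/
def realComplexity (b : ℕ) (ξ : ℝ) (n : ℕ) : ℕ := wordComplexity (digitSeq b ξ) n

/-- Exponents `ρ` for which `|ξ - p/q| < q^(-ρ)` has infinitely many rational solutions. -/
def muSet (ξ : ℝ) : Set ℝ :=
  {ρ : ℝ | {r : ℚ | |ξ - (r : ℝ)| < 1 / (r.den : ℝ) ^ ρ}.Infinite}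

/-- The irrationality exponent of a real number. -/
def mu (ξ : ℝ) : EReal := sSup ((fun ρ : ℝ => (ρ : EReal)) '' muSet ξ)

/-- Fractional power `V^x` of a finite word. -/
def wordPow {A : Type*} (V : List A) (x : ℝ) : List A :=
  (List.replicate ⌊x⌋₊ V).flatten ++ V.take ⌈(x - (⌊x⌋₊ : ℝ)) * (V.length : ℝ)⌉₊

/-- The prefix of length `n` of an infinite word. -/
def prefixWord {A : Type*} (a : ℕ → A) (n : ℕ) : List A := (List.range n).map a

/-- `L` is a prefix of the infinite word `a`. -/
def IsPrefixSeq {A : Type*} (a : ℕ → A) (L : List A) : Prop := L = prefixWord a L.length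

/-- The set of exponents defining the Diophantine exponent of an infinite word. -/
def dioSet {A : Type*} (a : ℕ → A) : Set ℝ :=
  {ρ : ℝ | ∀ m : ℕ, ∃ (U V : List A) (w : ℝ), V ≠ [] ∧ 0 < w ∧
    m ≤ (U ++ wordPow V w).length ∧ IsPrefixSeq a (U ++ wordPow V w) ∧
    ρ ≤ ((U ++ wordPow V w).length : ℝ) / ((U ++ V).length : ℝ)}

/-- The Diophantine exponent of an infinite word. -/
def dio {A : Type*} (a : ℕ → A) : EReal := sSup ((fun ρ : ℝ => (ρ : EReal)) '' dioSet a)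

/-- The set of exponents defining the initial critical exponent of an infinite word. -/
def iceSet {A : Type*} (a : ℕ → A) : Set ℝ :=
  {ρ : ℝ | 0 < ρ ∧ ∀ m : ℕ, ∃ n : ℕ, m ≤ n ∧ 0 < n ∧
    IsPrefixSeq a (wordPow (prefixWord a n) ρ)}

/-- The initial critical exponent of an infinite word. -/
def ice {A : Type*} (a : ℕ → A) : EReal := sSup ((fun ρ : ℝ => (ρ : EReal)) '' iceSet a)

/-- An infinite word is eventually periodic. -/
def EventuallyPeriodic {A : Type*} (a : ℕ → A) : Prop :=
  ∃ T : ℕ, 0 < T ∧ ∃ N : ℕ, ∀ n : ℕ, N ≤ n → a (n + T) = a n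

/-- A Sturmian word: an infinite binary word of subword complexity `n + 1`. -/
def IsSturmian (s : ℕ → Fin 2) : Prop := ∀ n : ℕ, 1 ≤ n → wordComplexity s n = n + 1

/-- The slope of a binary word: the frequency of the letter `1`. -/
def HasSlope (s : ℕ → Fin 2) (α : ℝ) : Prop :=
  Tendsto (fun n : ℕ => (((prefixWord s n).count 1 : ℕ) : ℝ) / (n : ℝ)) atTop (nhds α)

/-- The iterated Gauss map orbit: complete quotients of the continued fraction of `ξ`. -/
def cfTail (ξ : ℝ) : ℕ → ℝ
  | 0 => ξ
  | n + 1 => 1 / Int.fract (cfTail ξ n)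

/-- The `n`-th partial quotient of the continued fraction expansion of `ξ`. -/
def partialQuotient (ξ : ℝ) (n : ℕ) : ℤ := ⌊cfTail ξ n⌋




namespace DioAux

variable {A : Type*}

/-- segment `[s, e)` of the word `a` has period `q`. -/
def per (a : ℕ → A) (s e q : ℕ) : Prop := ∀ x, s ≤ x → x + q < e → a x = a (x + q)

lemma per_mono {a : ℕ → A} {s e q s' e' : ℕ} (h : per a s e q) (hs : s ≤ s') (he : e' ≤ e) :
    per a s' e' q := fun x hx hxe => h x (le_trans hs hx) (lt_of_lt_of_le hxe he)

lemma per_shift {a : ℕ → A} {S E Q : ℕ} (hper : per a S E Q) :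
    ∀ (k x : ℕ), S ≤ x → x + Q * k < E → a x = a (x + Q * k) := by
  intro k
  induction k with
  | zero => intro x _ _; simp
  | succ k ih =>
    intro x hx hxe
    rw [Nat.mul_succ] at hxe ⊢
    have h1 : x + Q * k < E := by omega
    have e1 := ih x hx h1
    have e2 := hper (x + Q * k) (le_trans hx (Nat.le_add_right _ _)) (by omega)
    rw [← Nat.add_assoc]
    exact e1.trans e2

/-- Fine–Wilf with threshold `p + q`, full-segment conclusion. -/
lemma fw (a : ℕ → A) : ∀ (B p q u v : ℕ), p + q ≤ B → 1 ≤ p → 1 ≤ q →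
    per a u v p → per a u v q → u + p + q ≤ v → per a u v (Nat.gcd p q) := by
  intro B
  induction B with
  | zero => intro p q u v h hp hq _ _ _; omega
  | succ B ih =>
    intro p q u v hB hp hq hpp hpq hlen
    rcases lt_trichotomy p q with hlt | heq | hgt
    · have hstep : per a u v (q - p) := by
        intro x hx hxe
        rcases Nat.lt_or_ge (x + q) v with h1 | h1
        · have e1 : a x = a (x + q) := hpq x hx h1
          have e2 : a (x + (q - p)) = a (x + (q - p) + p) := hpp (x + (q - p)) (by omega) (by omega)
          rw [show x + (q - p) + p = x + q from by omega] at e2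
          exact e1.trans e2.symm
        · have e1 : a (x - p) = a (x - p + p) := hpp (x - p) (by omega) (by omega)
          have e2 : a (x - p) = a (x - p + q) := hpq (x - p) (by omega) (by omega)
          rw [show x - p + p = x from by omega] at e1
          rw [show x - p + q = x + (q - p) from by omega] at e2
          exact e1.symm.trans e2
      have hgcd : Nat.gcd p (q - p) = Nat.gcd p q := by
        conv_rhs => rw [show q = (q - p) + p from by omega]
        rw [Nat.gcd_add_self_right]
      rw [← hgcd]
      exact ih p (q - p) u v (by omega) hp (by omega) hpp hstep (by omega)
    · subst heq
      rw [Nat.gcd_self]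
      exact hpq
    · have hstep : per a u v (p - q) := by
        intro x hx hxe
        rcases Nat.lt_or_ge (x + p) v with h1 | h1
        · have e1 : a x = a (x + p) := hpp x hx h1
          have e2 : a (x + (p - q)) = a (x + (p - q) + q) := hpq (x + (p - q)) (by omega) (by omega)
          rw [show x + (p - q) + q = x + p from by omega] at e2
          exact e1.trans e2.symm
        · have e1 : a (x - q) = a (x - q + q) := hpq (x - q) (by omega) (by omega)
          have e2 : a (x - q) = a (x - q + p) := hpp (x - q) (by omega) (by omega)
          rw [show x - q + q = x from by omega] at e1
          rw [show x - q + p = x + (p - q) from by omega] at e2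
          exact e1.symm.trans e2
      have hgcd : Nat.gcd (p - q) q = Nat.gcd p q := by
        conv_rhs => rw [show p = (p - q) + q from by omega]
        rw [Nat.gcd_add_self_left]
      rw [← hgcd]
      exact ih (p - q) q u v (by omega) (by omega) hq hstep hpq (by omega)

/-- Propagation: a `g`-periodic window of length `≥ Q + g` inside a `Q`-periodic segment
makes the whole segment `g`-periodic. -/
lemma per_prop {a : ℕ → A} {S E Q g u v : ℕ} (hQ : 1 ≤ Q) (hg : 1 ≤ g)
    (hper : per a S E Q) (hwin : per a u v g) (hSu : S ≤ u) (hvE : v ≤ E)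
    (hlen : u + Q + g ≤ v) : per a S E g := by
  have up : ∀ x, u ≤ x → x + g < E → a x = a (x + g) := by
    intro x
    induction x using Nat.strong_induction_on with
    | _ x ih =>
      intro hux hxE
      rcases Nat.lt_or_ge (x + g) v with h1 | h1
      · exact hwin x hux h1
      · have h2 : u ≤ x - Q := by omega
        have h3 := ih (x - Q) (by omega) h2 (by omega)
        have e1 : a (x - Q) = a x := by
          have h4 := hper (x - Q) (by omega) (by omega)
          rw [show x - Q + Q = x from by omega] at h4; exact h4
        have e2 : a (x - Q + g) = a (x + g) := by
          have h4 := hper (x - Q + g) (by omega) (by omega)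
          rw [show x - Q + g + Q = x + g from by omega] at h4; exact h4
        rw [← e1, ← e2]; exact h3
  have down : ∀ d x, S ≤ x → x + g < E → u - x ≤ d → a x = a (x + g) := by
    intro d
    induction d using Nat.strong_induction_on with
    | _ d ih
    =>
      intro x hx hxE hd
      rcases Nat.lt_or_ge x u with hxu | hxu
      · have e1 : a x = a (x + Q) := hper x hx (by omega)
        have e2 : a (x + g) = a (x + g + Q) := hper (x + g) (by omega) (by omega)
        have h3 : a (x + Q) = a (x + Q + g) :=
          ih (u - (x + Q)) (by omega) (x + Q) (by omega) (by omega) (by omega)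
        rw [e1, h3, show x + Q + g = x + g + Q from by omega, ← e2]
      · exact up x hxu hxE
  intro x hx hxE
  exact down (u - x) x hx hxE le_rfl

/-- Glue two overlapping segments with the same period. -/
lemma per_glue {a : ℕ → A} {s1 e1 s2 e2 q : ℕ} (h1 : per a s1 e1 q) (h2 : per a s2 e2 q)
    (hov : max s1 s2 + q ≤ min e1 e2) : per a (min s1 s2) (max e1 e2) q := by
  intro x hx hxe
  by_cases hc1 : s1 ≤ x ∧ x + q < e1
  · exact h1 x hc1.1 hc1.2
  · by_cases hc2 : s2 ≤ x ∧ x + q < e2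
    · exact h2 x hc2.1 hc2.2
    · exfalso; omega

end DioAux
-- pigeonhole + scale_run
namespace DioAux

lemma exists_match {A : Type*} [Fintype A] (a : ℕ → A) (C : ℕ)
    (hC : ∀ n : ℕ, 1 ≤ n → wordComplexity a n ≤ n + C) (n : ℕ) (hn : 1 ≤ n) :
    ∃ i j, i < j ∧ j ≤ n + C ∧ ∀ k, k < n → a (i + k) = a (j + k) := by
  classical
  set f : Fin (n + C + 1) → (Fin n → A) := fun t k => a (t + k) with hf
  have hnotinj : ¬ Function.Injective f := by
    intro hinj
    have h1 : Set.range f ⊆ {w : Fin n → A | ∃ j : ℕ, ∀ i : Fin n, w i = a (j + i)} := by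
      rintro w ⟨t, rfl⟩
      exact ⟨t, fun i => rfl⟩
    have h2 : (Set.range f).ncard ≤ wordComplexity a n := by
      unfold wordComplexity
      exact Set.ncard_le_ncard h1 (Set.toFinite _)
    have h3 : (Set.range f).ncard = n + C + 1 := by
      rw [← Nat.card_coe_set_eq, Nat.card_range_of_injective hinj,
        Nat.card_eq_fintype_card, Fintype.card_fin]
    have h4 := hC n hn
    omega
  rw [Function.not_injective_iff] at hnotinj
  obtain ⟨t1, t2, hfeq, hne⟩ := hnotinj
  have key : ∀ k, k < n → a ((t1 : ℕ) + k) = a ((t2 : ℕ) + k) := by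
    intro k hk
    have h5 := congrFun hfeq ⟨k, hk⟩
    simpa [hf] using h5
  rcases Nat.lt_or_ge (t1 : ℕ) (t2 : ℕ) with hlt | hge
  · exact ⟨t1, t2, hlt, by have := t2.isLt; omega, key⟩
  · have hlt : (t2 : ℕ) < (t1 : ℕ) := by
      rcases Nat.eq_or_lt_of_le hge with h | h
      · exact absurd (Fin.ext h.symm) hne
      · exact h
    exact ⟨t2, t1, hlt, by have := t1.isLt; omega, fun k hk => (key k hk).symm⟩

lemma scale_run {A : Type*} [Fintype A] (a : ℕ → A) (C m : ℕ)
    (hC : ∀ n : ℕ, 1 ≤ n → wordComplexity a n ≤ n + C)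
    (hap : ¬ EventuallyPeriodic a)
    (hneg : ∀ n' i j, i < j → (∀ k, k < n' → a (i + k) = a (j + k)) → m ≤ j + n' →
      100 * n' < 101 * j)
    (n : ℕ) (hn : 1 ≤ n) (hm : m ≤ n) :
    ∃ s q e, 1 ≤ q ∧ per a s e q ∧ (∀ p, 1 ≤ p → p < q → ¬ per a s e p) ∧
      (0 < s → a (s - 1) ≠ a (s - 1 + q)) ∧ a (e - q) ≠ a e ∧
      s + q ≤ n + C ∧ s + q + n ≤ e ∧ 100 * (e - (s + q)) < 101 * (s + q) := by
  classical
  obtain ⟨i0, j0, hij0, hj0, hmatch0⟩ := exists_match a C hC n hn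
  have hPex : ∃ e, ∃ i j, i < j ∧ j + n = e ∧ ∀ k, k < n → a (i + k) = a (j + k) :=
    ⟨j0 + n, i0, j0, hij0, rfl, hmatch0⟩
  obtain ⟨i, j, hij, hjE, hmatch⟩ := Nat.find_spec hPex
  set E := Nat.find hPex with hEdef
  have hEmin := fun e' (he' : e' < E) => Nat.find_min hPex he'
  have hEle : E ≤ j0 + n := Nat.find_min' hPex ⟨i0, j0, hij0, rfl, hmatch0⟩
  have hjnC : j ≤ n + C := by omega
  set q := j - i with hqdef
  have hq1 : 1 ≤ q := by omega
  have hiq : i + q = j := by omega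
  have hper0 : per a i (j + n) q := by
    intro x hx hxe
    have hk : x - i < n := by omega
    have h5 := hmatch (x - i) hk
    rw [show i + (x - i) = x from by omega, show j + (x - i) = x + q from by omega] at h5
    exact h5
  -- right extension
  have hbreakex : ∃ e', ¬ per a i e' q := by
    by_contra hall
    push_neg at hall
    exact hap ⟨q, hq1, i, fun x hx => (hall (x + q + 1) x hx (by omega)).symm⟩
  set E0 := Nat.find hbreakex with hE0def
  have hE0spec : ¬ per a i E0 q := Nat.find_spec hbreakex
  have hE0min : ∀ e', e' < E0 → per a i e' q := by
    intro e' he'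
    by_contra hcc
    exact Nat.find_min hbreakex he' hcc
  have hE0pos : j + n < E0 := by
    rcases Nat.lt_or_ge (j + n) E0 with h | h
    · exact h
    · exact absurd (per_mono hper0 le_rfl h) hE0spec
  set e := E0 - 1 with hedef
  have hpere : per a i e q := hE0min e (by omega)
  have hejn : j + n ≤ e := by omega
  have hbreakr : a (e - q) ≠ a e := by
    intro heq
    apply hE0spec
    intro x hx hxe
    rcases Nat.lt_or_ge (x + q) (E0 - 1) with h | h
    · exact hpere x hx h
    · have hx1 : x = e - q := by omega
      rw [hx1, show e - q + q = e from by omega]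
      exact heq
  -- left extension
  have hSex : ∃ s', per a s' e q := ⟨i, hpere⟩
  set S := Nat.find hSex with hSdef
  have hperS : per a S e q := Nat.find_spec hSex
  have hSi : S ≤ i := Nat.find_min' hSex hpere
  have hbreakl : 0 < S → a (S - 1) ≠ a (S - 1 + q) := by
    intro hS0 heq
    have hnot : ¬ per a (S - 1) e q := Nat.find_min hSex (by omega)
    apply hnot
    intro x hx hxe
    rcases Nat.eq_or_lt_of_le hx with h | h
    · rw [← h]; exact heq
    · exact hperS x (by omega) hxe
  -- minimal period
  have hminper : ∀ p, 1 ≤ p → p < q → ¬ per a S e p := by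
    intro p hp hpq hperp
    have hperp' : per a i (j + n) p := per_mono hperp hSi hejn
    apply hEmin (i + p + n) (by omega)
    refine ⟨i, i + p, by omega, by omega, fun k hk => ?_⟩
    have h5 := hperp' (i + k) (by omega) (by omega)
    rw [show i + k + p = i + p + k from by omega] at h5
    exact h5
  -- capacity
  have hcap : 100 * (e - (S + q)) < 101 * (S + q) := by
    apply hneg (e - (S + q)) S (S + q) (by omega)
    · intro k hk
      have h5 := hperS (S + k) (by omega) (by omega)
      rw [show S + k + q = S + q + k from by omega] at h5
      exact h5
    · omega
  exact ⟨S, q, e, hq1, hperS, hminper, hbreakl, hbreakr, by omega, by omega, hcap⟩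

end DioAux
namespace DioAux

lemma length_flatten_replicate {A : Type*} (V : List A) (W : ℕ) :
    ((List.replicate W V).flatten).length = W * V.length := by
  induction W with
  | zero => simp
  | succ W ih =>
    rw [List.replicate_succ, List.flatten_cons, List.length_append, ih, Nat.succ_mul]
    omega

lemma getElem?_flatten_replicate {A : Type*} (V : List A) (hV : 0 < V.length) :
    ∀ (W k : ℕ), k < W * V.length →
      ((List.replicate W V).flatten)[k]? = V[k % V.length]? := by
  intro W
  induction W with
  | zero => intro k hk; simp at hk
  | succ W ih =>
    intro k hk
    rw [List.replicate_succ, List.flatten_cons]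
    rcases Nat.lt_or_ge k V.length with h | h
    · rw [List.getElem?_append_left h, Nat.mod_eq_of_lt h]
    · rw [List.getElem?_append_right h]
      have hk' : k - V.length < W * V.length := by
        rw [Nat.succ_mul] at hk
        omega
      rw [ih (k - V.length) hk']
      conv_rhs => rw [show k = (k - V.length) + V.length from by omega, Nat.add_mod_right]

lemma isPrefixSeq_of_get {A : Type*} (a : ℕ → A) (L : List A)
    (h : ∀ (k : ℕ), k < L.length → L[k]? = some (a k)) : IsPrefixSeq a L := by
  unfold IsPrefixSeq prefixWord
  apply List.ext_getElem?
  intro k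
  rcases Nat.lt_or_ge k L.length with hk | hk
  · rw [h k hk, List.getElem?_map, List.getElem?_range hk]
    rfl
  · rw [List.getElem?_eq_none hk, List.getElem?_map,
      List.getElem?_eq_none (l := List.range L.length) (by simpa using hk)]
    rfl

lemma collision_witness {A : Type*} (a : ℕ → A) (m n' i j : ℕ) (ρ : ℝ)
    (hij : i < j) (hmatch : ∀ k, k < n' → a (i + k) = a (j + k)) (hm : m ≤ j + n')
    (hρ : ρ ≤ ((j + n' : ℕ) : ℝ) / ((j : ℕ) : ℝ)) :
    ∃ (U V : List A) (w : ℝ), V ≠ [] ∧ 0 < w ∧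
      m ≤ (U ++ wordPow V w).length ∧ IsPrefixSeq a (U ++ wordPow V w) ∧
      ρ ≤ ((U ++ wordPow V w).length : ℝ) / ((U ++ V).length : ℝ) := by
  classical
  set q := j - i with hqdef
  have hq1 : 0 < q := by omega
  have hiq : i + q = j := by omega
  set M := n' + q with hMdef
  have hM1 : 0 < M := by omega
  set K := M / q with hKdef
  set R := M % q with hRdef
  have hKR : q * K + R = M := Nat.div_add_mod M q
  have hKR' : K * q + R = M := by rw [Nat.mul_comm K q]; exact hKR
  have hRq : R < q := Nat.mod_lt _ hq1
  set U : List A := prefixWord a i with hUdef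
  set V : List A := (List.range q).map (fun k => a (i + k)) with hVdef
  have hVlen : V.length = q := by simp [hVdef]
  have hVne : V ≠ [] := by
    apply List.ne_nil_of_length_pos
    omega
  set w : ℝ := (M : ℝ) / (q : ℝ) with hwdef
  have hq0R : (0 : ℝ) < (q : ℝ) := by exact_mod_cast hq1
  have hwpos : 0 < w := div_pos (by exact_mod_cast hM1) hq0R
  have hfloor : ⌊w⌋₊ = K := by
    rw [hwdef, Nat.floor_div_natCast, Nat.floor_natCast]
  have hceil : ⌈(w - (⌊w⌋₊ : ℝ)) * ((V.length : ℕ) : ℝ)⌉₊ = R := by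
    rw [hfloor, hVlen]
    have hwq : w * (q : ℝ) = (M : ℝ) := div_mul_cancel₀ _ (ne_of_gt hq0R)
    have h1 : (w - (K : ℝ)) * (q : ℝ) = (R : ℝ) := by
      rw [sub_mul, hwq]
      have h2 : (q : ℝ) * (K : ℝ) + (R : ℝ) = (M : ℝ) := by exact_mod_cast hKR
      linarith [h2]
    rw [h1, Nat.ceil_natCast]
  have hwp : wordPow V w = (List.replicate K V).flatten ++ V.take R := by
    unfold wordPow
    rw [hceil, hfloor]
  have hflen : ((List.replicate K V).flatten).length = K * q := by
    rw [length_flatten_replicate, hVlen]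
  have hwplen : (wordPow V w).length = M := by
    rw [hwp, List.length_append, hflen, List.length_take, hVlen,
      Nat.min_eq_left (le_of_lt hRq)]
    omega
  have hUlen : U.length = i := by simp [hUdef, prefixWord]
  have htot : (U ++ wordPow V w).length = j + n' := by
    rw [List.length_append, hUlen, hwplen]
    omega
  have hUVlen : (U ++ V).length = j := by
    rw [List.length_append, hUlen, hVlen]
    omega
  have hper0 : per a i (j + n') q := by
    intro x hx hxe
    have hk : x - i < n' := by omega
    have h5 := hmatch (x - i) hk
    rw [show i + (x - i) = x from by omega, show j + (x - i) = x + q from by omega] at h5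
    exact h5
  have hVget : ∀ t : ℕ, t < q → V[t]? = some (a (i + t)) := by
    intro t ht
    rw [hVdef, List.getElem?_map, List.getElem?_range ht]
    rfl
  refine ⟨U, V, w, hVne, hwpos, by rw [htot]; exact hm, ?_, ?_⟩
  · apply isPrefixSeq_of_get
    intro k hk
    rw [htot] at hk
    rcases Nat.lt_or_ge k i with hki | hki
    · rw [List.getElem?_append_left (by rw [hUlen]; exact hki), hUdef]
      unfold prefixWord
      rw [List.getElem?_map, List.getElem?_range hki]
      rfl
    · rw [List.getElem?_append_right (by rw [hUlen]; exact hki), hUlen]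
      set r := k - i with hrdef
      have hrM : r < M := by omega
      have hval : (wordPow V w)[r]? = some (a (i + r % q)) := by
        rw [hwp]
        rcases Nat.lt_or_ge r (K * q) with h | h
        · rw [List.getElem?_append_left (by rw [hflen]; exact h)]
          rw [getElem?_flatten_replicate V (by omega) K r (by rw [hVlen]; exact h), hVlen]
          exact hVget _ (Nat.mod_lt _ hq1)
        · rw [List.getElem?_append_right (by rw [hflen]; exact h), hflen]
          have htlt : r - K * q < R := by omega
          rw [List.getElem?_take_of_lt htlt]
          have hmod : r % q = r - K * q := by
            conv_lhs => rw [show r = q * K + (r - K * q) from by omega]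
            rw [Nat.mul_add_mod q K (r - K * q), Nat.mod_eq_of_lt (by omega)]
          rw [← hmod]
          exact hVget _ (by omega)
      rw [hval]
      congr 1
      -- a (i + r % q) = a k
      have hmd : r % q + q * (r / q) = r := Nat.mod_add_div r q
      have hsh := per_shift hper0 (r / q) (i + r % q) (by omega) (by omega)
      rw [show i + r % q + q * (r / q) = i + r from by omega] at hsh
      rw [hsh, show i + r = k from by omega]
  · rw [htot, hUVlen]
    exact hρ

end DioAux
namespace DioAux

lemma glue_false {A : Type*} (a : ℕ → A) (sX qX eX sY eY : ℕ)
    (hperX : per a sX eX qX) (hperY : per a sY eY qX)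
    (hbrX : a (eX - qX) ≠ a eX) (hbrY : a (eY - qX) ≠ a eY)
    (hblX : 0 < sX → a (sX - 1) ≠ a (sX - 1 + qX))
    (hq1 : 1 ≤ qX)
    (hseX : sX + qX + 1 ≤ eX) (hseY : sY + qX + 1 ≤ eY)
    (hL : eX + sY < eY + sX)
    (hglue : max sX sY + qX ≤ min eX eY) : False := by
  have hg := per_glue hperX hperY hglue
  have hmins : min sX sY ≤ sX ∧ min sX sY ≤ sY := ⟨min_le_left _ _, min_le_right _ _⟩
  have hmaxe : eX ≤ max eX eY ∧ eY ≤ max eX eY := ⟨le_max_left _ _, le_max_right _ _⟩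
  rcases Nat.lt_trichotomy eX eY with h | h | h
  · have h5 := hg (eX - qX) (by omega) (by omega)
    rw [show eX - qX + qX = eX from by omega] at h5
    exact hbrX h5
  · have hs : sY < sX := by omega
    have h5 := hg (sX - 1) (by omega) (by omega)
    exact hblX (by omega) h5
  · have h5 := hg (eY - qX) (by omega) (by omega)
    rw [show eY - qX + qX = eY from by omega] at h5
    exact hbrY h5

lemma pair_false {A : Type*} (a : ℕ → A) (sX qX eX sY qY eY : ℕ)
    (hqX1 : 1 ≤ qX) (hqY1 : 1 ≤ qY)
    (hperX : per a sX eX qX) (hperY : per a sY eY qY)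
    (hmpX : ∀ p, 1 ≤ p → p < qX → ¬ per a sX eX p)
    (hmpY : ∀ p, 1 ≤ p → p < qY → ¬ per a sY eY p)
    (hbrX : a (eX - qX) ≠ a eX) (hbrY : a (eY - qY) ≠ a eY)
    (hblX : 0 < sX → a (sX - 1) ≠ a (sX - 1 + qX))
    (hseX : sX + qX + 1 ≤ eX) (hseY : sY + qY + 1 ≤ eY)
    (hL : eX + sY + qY < eY + sX + qX)
    (hov : max sX sY + qX + qY ≤ min eX eY) : False := by
  set M := max sX sY with hM
  set E := min eX eY with hE
  have hpX : per a M E qX := per_mono hperX (le_max_left _ _) (min_le_left _ _)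
  have hpY : per a M E qY := per_mono hperY (le_max_right _ _) (min_le_right _ _)
  set g := Nat.gcd qX qY with hgdef
  have hg1 : 0 < g := Nat.gcd_pos_of_pos_left _ (by omega)
  have hgX : g ≤ qX := Nat.gcd_le_left _ (by omega)
  have hgY : g ≤ qY := Nat.gcd_le_right _ (by omega)
  have hfw : per a M E g := fw a (qX + qY) qX qY M E le_rfl hqX1 hqY1 hpX hpY (by omega)
  have hprX : per a sX eX g :=
    per_prop hqX1 hg1 hperX hfw (le_max_left _ _) (min_le_left _ _) (by omega)
  have hprY : per a sY eY g :=
    per_prop hqY1 hg1 hperY hfw (le_max_right _ _) (min_le_right _ _) (by omega)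
  rcases Nat.lt_or_ge g qX with h | h
  · exact hmpX g hg1 h hprX
  · have hgqX : g = qX := by omega
    rcases Nat.lt_or_ge g qY with h2 | h2
    · exact hmpY g hg1 h2 hprY
    · have hgqY : g = qY := by omega
      have hq : qY = qX := by omega
      rw [hq] at hperY hbrY hseY
      exact glue_false a sX qX eX sY eY hperX hperY hbrX hbrY hblX hqX1 hseX hseY
        (by omega) (by omega)

lemma blow_dir {A : Type*} (a : ℕ → A) (C m n nX nY : ℕ)
    (hneg : ∀ n' i j, i < j → (∀ k, k < n' → a (i + k) = a (j + k)) → m ≤ j + n' →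
      100 * n' < 101 * j)
    (sX qX eX sY qY eY : ℕ)
    (hperX : per a sX eX qX) (hperY : per a sY eY qY)
    (hqXY : qX < qY)
    (hcapX : 100 * (eX - (sX + qX)) < 101 * (sX + qX))
    (hcapY : 100 * (eY - (sY + qY)) < 101 * (sY + qY))
    (hseX : sX + qX + nX ≤ eX) (hseY : sY + qY + nY ≤ eY)
    (hlamX : sX + qX ≤ nX + C) (hlamY : sY + qY ≤ nY + C)
    (hnX : n ≤ nX) (hnY : n ≤ nY)
    (hnXu : 1000000 * nX ≤ 1030301 * n + 7000000 * C + 7000000)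
    (hnYu : 1000000 * nY ≤ 1030301 * n + 7000000 * C + 7000000)
    (hsX : 2525 * sX ≤ 227 * n + 1000000 * C + 1000000)
    (hsY : 2525 * sY ≤ 227 * n + 1000000 * C + 1000000)
    (hm : m ≤ n) (hbig : 1000000 * C + 1000000 * m + 2000000 ≤ n) : False := by
  set d := qY - qX with hd
  have hde : qX + d = qY := by omega
  set jst := max sX (sY + d) with hjst
  set ist := jst - d with hist
  set β := min eX eY with hβ
  set nst := β - qX - jst with hnst
  have hj1 : sX ≤ jst := le_max_left _ _
  have hj2 : sY + d ≤ jst := le_max_right _ _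
  have hj3 : jst ≤ sX + sY + d := by omega
  have hie : ist + d = jst := by omega
  have hβ1 : β ≤ eX := min_le_left _ _
  have hβ2 : β ≤ eY := min_le_right _ _
  have heX : 201 * n < 101 * eX := by omega
  have heY : 201 * n < 101 * eY := by omega
  have hβl : 201 * n < 101 * β := by omega
  have hmatch : ∀ k, k < nst → a (ist + k) = a (jst + k) := by
    intro k hk
    have h1 : a (ist + k) = a (ist + k + qY) := hperY (ist + k) (by omega) (by omega)
    have h2 : a (jst + k) = a (jst + k + qX) := hperX (jst + k) (by omega) (by omega)
    have h3 : ist + k + qY = jst + k + qX := by omega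
    rw [h1, h3]
    exact h2.symm
  have happ := hneg nst ist jst (by omega) hmatch (by omega)
  omega

end DioAux
namespace DioAux

lemma two_run_false {A : Type*} (a : ℕ → A) (C m n nX nY : ℕ)
    (hneg : ∀ n' i j, i < j → (∀ k, k < n' → a (i + k) = a (j + k)) → m ≤ j + n' →
      100 * n' < 101 * j)
    (sX qX eX sY qY eY : ℕ)
    (hqX1 : 1 ≤ qX) (hqY1 : 1 ≤ qY)
    (hperX : per a sX eX qX) (hperY : per a sY eY qY)
    (hbrX : a (eX - qX) ≠ a eX) (hbrY : a (eY - qY) ≠ a eY)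
    (hblX : 0 < sX → a (sX - 1) ≠ a (sX - 1 + qX))
    (hcapX : 100 * (eX - (sX + qX)) < 101 * (sX + qX))
    (hcapY : 100 * (eY - (sY + qY)) < 101 * (sY + qY))
    (hseX : sX + qX + nX ≤ eX) (hseY : sY + qY + nY ≤ eY)
    (hlamX : sX + qX ≤ nX + C) (hlamY : sY + qY ≤ nY + C)
    (hnX : n ≤ nX) (hnY : n ≤ nY)
    (hnXu : 1000000 * nX ≤ 1030301 * n + 7000000 * C + 7000000)
    (hnYu : 1000000 * nY ≤ 1030301 * n + 7000000 * C + 7000000)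
    (hsX : 2525 * sX ≤ 227 * n + 1000000 * C + 1000000)
    (hsY : 2525 * sY ≤ 227 * n + 1000000 * C + 1000000)
    (hL : eX + sY + qY < eY + sX + qX)
    (hm : m ≤ n) (hbig : 1000000 * C + 1000000 * m + 2000000 ≤ n) : False := by
  rcases lt_trichotomy qX qY with h | h | h
  · exact blow_dir a C m n nX nY hneg sX qX eX sY qY eY hperX hperY h hcapX hcapY
      hseX hseY hlamX hlamY hnX hnY hnXu hnYu hsX hsY hm hbig
  · subst h
    have heX : 201 * n < 101 * eX := by omega
    have heY : 201 * n < 101 * eY := by omega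
    exact glue_false a sX qX eX sY eY hperX hperY hbrX hbrY hblX hqX1
      (by omega) (by omega) (by omega) (by omega)
  · exact blow_dir a C m n nY nX hneg sY qY eY sX qX eX hperY hperX h hcapY hcapX
      hseY hseX hlamY hlamX hnY hnX hnYu hnXu hsY hsX hm hbig

/-- arithmetic helpers with minimal premises (to keep `omega` fast) -/
lemma arith_elow (s q e nt n : ℕ) (h1 : s + q + nt ≤ e)
    (h2 : 100 * (e - (s + q)) < 101 * (s + q)) (h3 : n ≤ nt) : 201 * n < 101 * e := by
  omega

lemma arith_next (s q e nt n t2 C : ℕ) (hdef : t2 = e - (s + q) + 1)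
    (h1 : s + q + nt ≤ e) (h2 : 100 * (e - (s + q)) < 101 * (s + q))
    (h3 : n ≤ nt) (h4 : s + q ≤ nt + C) :
    n + 1 ≤ t2 ∧ 100 * t2 ≤ 101 * nt + 101 * C + 100 := by
  omega

lemma arith_chain (n n2 n3 n4 C : ℕ)
    (h2 : 100 * n2 ≤ 101 * n + 101 * C + 100)
    (h3 : 100 * n3 ≤ 101 * n2 + 101 * C + 100)
    (h4 : 100 * n4 ≤ 101 * n3 + 101 * C + 100) :
    1000000 * n ≤ 1030301 * n + 7000000 * C + 7000000 ∧
    1000000 * n2 ≤ 1030301 * n + 7000000 * C + 7000000 ∧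
    1000000 * n3 ≤ 1030301 * n + 7000000 * C + 7000000 ∧
    1000000 * n4 ≤ 1030301 * n + 7000000 * C + 7000000 := by
  omega

lemma arith_L (s1 q1 e1 s3 q3 e3 n2 n3 : ℕ) (h1 : n2 = e1 - (s1 + q1) + 1)
    (h2 : n2 ≤ n3) (h3 : s3 + q3 + n3 ≤ e3) (h4 : s1 + q1 ≤ e1) :
    e1 + s3 + q3 < e3 + s1 + q1 := by
  omega

lemma arith_sigma (s1 q1 e1 s2 q2 e2 n1 n2 n C : ℕ)
    (hfail : ¬ (max s1 s2 + q1 + q2 ≤ min e1 e2))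
    (hlam1 : s1 + q1 ≤ n1 + C) (hlam2 : s2 + q2 ≤ n2 + C)
    (he1 : 201 * n < 101 * e1) (he2 : 201 * n < 101 * e2)
    (hU1 : 1000000 * n1 ≤ 1030301 * n + 7000000 * C + 7000000)
    (hU2 : 1000000 * n2 ≤ 1030301 * n + 7000000 * C + 7000000) :
    2525 * s1 ≤ 227 * n + 1000000 * C + 1000000 ∨
    2525 * s2 ≤ 227 * n + 1000000 * C + 1000000 := by
  omega

lemma main_aperiodic {A : Type*} [Fintype A] (a : ℕ → A) (C : ℕ)
    (hC : ∀ n : ℕ, 1 ≤ n → wordComplexity a n ≤ n + C)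
    (hap : ¬ EventuallyPeriodic a) : ((201 : ℝ)/100) ∈ dioSet a := by
  intro m
  by_contra hcon
  have hneg : ∀ n' i j, i < j → (∀ k, k < n' → a (i + k) = a (j + k)) → m ≤ j + n' →
      100 * n' < 101 * j := by
    intro n' i j hij hmatch hm
    by_contra hle
    push_neg at hle
    apply hcon
    apply collision_witness a m n' i j ((201 : ℝ)/100) hij hmatch hm
    have hj0 : (0 : ℝ) < ((j : ℕ) : ℝ) := by
      have : 0 < j := by omega
      exact_mod_cast this
    rw [div_le_div_iff₀ (by norm_num) hj0]
    have hle' : (101 : ℝ) * (j : ℕ) ≤ 100 * (n' : ℕ) := by exact_mod_cast hle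
    push_cast
    push_cast at hle'
    linarith
  obtain ⟨n, hndef⟩ : ∃ n : ℕ, n = 1000000 * (C + m + 2) := ⟨_, rfl⟩
  have hn1 : 1 ≤ n := by omega
  have hnm : m ≤ n := by omega
  have hbig : 1000000 * C + 1000000 * m + 2000000 ≤ n := by omega
  clear hndef
  obtain ⟨s1, q1, e1, hq1, hper1, hmp1, hbl1, hbr1, hlam1, hse1, hcap1⟩ :=
    scale_run a C m hC hap hneg n hn1 hnm
  have hsqe1 : s1 + q1 ≤ e1 := by omega
  have hsqe1' : s1 + q1 + 1 ≤ e1 := by omega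
  obtain ⟨n2, hn2def⟩ : ∃ t : ℕ, t = e1 - (s1 + q1) + 1 := ⟨_, rfl⟩
  obtain ⟨hn2l, hu2⟩ := arith_next s1 q1 e1 n n n2 C hn2def hse1 hcap1 le_rfl hlam1
  have hn2g : n ≤ n2 := by omega
  have hn2one : 1 ≤ n2 := by omega
  have hn2m : m ≤ n2 := by omega
  obtain ⟨s2, q2, e2, hq2, hper2, hmp2, hbl2, hbr2, hlam2, hse2, hcap2⟩ :=
    scale_run a C m hC hap hneg n2 hn2one hn2m
  have hsqe2 : s2 + q2 ≤ e2 := by omega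
  have hsqe2' : s2 + q2 + 1 ≤ e2 := by omega
  obtain ⟨n3, hn3def⟩ : ∃ t : ℕ, t = e2 - (s2 + q2) + 1 := ⟨_, rfl⟩
  obtain ⟨hn3l, hu3⟩ := arith_next s2 q2 e2 n2 n2 n3 C hn3def hse2 hcap2 le_rfl hlam2
  have hn3g : n ≤ n3 := by omega
  have hn3g2 : n2 ≤ n3 := by omega
  have hn3one : 1 ≤ n3 := by omega
  have hn3m : m ≤ n3 := by omega
  obtain ⟨s3, q3, e3, hq3, hper3, hmp3, hbl3, hbr3, hlam3, hse3, hcap3⟩ :=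
    scale_run a C m hC hap hneg n3 hn3one hn3m
  have hsqe3 : s3 + q3 ≤ e3 := by omega
  have hsqe3' : s3 + q3 + 1 ≤ e3 := by omega
  obtain ⟨n4, hn4def⟩ : ∃ t : ℕ, t = e3 - (s3 + q3) + 1 := ⟨_, rfl⟩
  obtain ⟨hn4l, hu4⟩ := arith_next s3 q3 e3 n3 n3 n4 C hn4def hse3 hcap3 le_rfl hlam3
  have hn4g : n ≤ n4 := by omega
  have hn4g2 : n2 ≤ n4 := by omega
  have hn4g3 : n3 ≤ n4 := by omega
  have hn4one : 1 ≤ n4 := by omega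
  have hn4m : m ≤ n4 := by omega
  obtain ⟨s4, q4, e4, hq4, hper4, hmp4, hbl4, hbr4, hlam4, hse4, hcap4⟩ :=
    scale_run a C m hC hap hneg n4 hn4one hn4m
  have hsqe4 : s4 + q4 ≤ e4 := by omega
  have hsqe4' : s4 + q4 + 1 ≤ e4 := by omega
  obtain ⟨hU1, hU2, hU3, hU4⟩ := arith_chain n n2 n3 n4 C hu2 hu3 hu4
  have he1 := arith_elow s1 q1 e1 n n hse1 hcap1 le_rfl
  have he2 := arith_elow s2 q2 e2 n2 n hse2 hcap2 hn2g
  have he3 := arith_elow s3 q3 e3 n3 n hse3 hcap3 hn3g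
  have he4 := arith_elow s4 q4 e4 n4 n hse4 hcap4 hn4g
  have hL12 := arith_L s1 q1 e1 s2 q2 e2 n2 n2 hn2def le_rfl hse2 hsqe1
  have hL34 := arith_L s3 q3 e3 s4 q4 e4 n4 n4 hn4def le_rfl hse4 hsqe3
  have hL13 := arith_L s1 q1 e1 s3 q3 e3 n2 n3 hn2def hn3g2 hse3 hsqe1
  have hL14 := arith_L s1 q1 e1 s4 q4 e4 n2 n4 hn2def hn4g2 hse4 hsqe1
  have hL23 := arith_L s2 q2 e2 s3 q3 e3 n3 n3 hn3def le_rfl hse3 hsqe2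
  have hL24 := arith_L s2 q2 e2 s4 q4 e4 n3 n4 hn3def hn4g3 hse4 hsqe2
  by_cases hov12 : max s1 s2 + q1 + q2 ≤ min e1 e2
  · exact pair_false a s1 q1 e1 s2 q2 e2 hq1 hq2 hper1 hper2 hmp1 hmp2 hbr1 hbr2 hbl1
      hsqe1' hsqe2' hL12 hov12
  · by_cases hov34 : max s3 s4 + q3 + q4 ≤ min e3 e4
    · exact pair_false a s3 q3 e3 s4 q4 e4 hq3 hq4 hper3 hper4 hmp3 hmp4 hbr3 hbr4 hbl3
        hsqe3' hsqe4' hL34 hov34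
    · have hs12 := arith_sigma s1 q1 e1 s2 q2 e2 n n2 n C hov12 hlam1 hlam2 he1 he2 hU1 hU2
      have hs34 := arith_sigma s3 q3 e3 s4 q4 e4 n3 n4 n C hov34 hlam3 hlam4 he3 he4 hU3 hU4
      rcases hs12 with hsA | hsA <;> rcases hs34 with hsB | hsB
      · exact two_run_false a C m n n n3 hneg s1 q1 e1 s3 q3 e3 hq1 hq3 hper1 hper3
          hbr1 hbr3 hbl1 hcap1 hcap3 hse1 hse3 hlam1 hlam3 le_rfl hn3g
          hU1 hU3 hsA hsB hL13 hnm hbig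
      · exact two_run_false a C m n n n4 hneg s1 q1 e1 s4 q4 e4 hq1 hq4 hper1 hper4
          hbr1 hbr4 hbl1 hcap1 hcap4 hse1 hse4 hlam1 hlam4 le_rfl hn4g
          hU1 hU4 hsA hsB hL14 hnm hbig
      · exact two_run_false a C m n n2 n3 hneg s2 q2 e2 s3 q3 e3 hq2 hq3 hper2 hper3
          hbr2 hbr3 hbl2 hcap2 hcap3 hse2 hse3 hlam2 hlam3 hn2g hn3g
          hU2 hU3 hsA hsB hL23 hnm hbig
      · exact two_run_false a C m n n2 n4 hneg s2 q2 e2 s4 q4 e4 hq2 hq4 hper2 hper4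
          hbr2 hbr4 hbl2 hcap2 hcap4 hse2 hse4 hlam2 hlam4 hn2g hn4g
          hU2 hU4 hsA hsB hL24 hnm hbig

lemma main_periodic {A : Type*} (a : ℕ → A) (hp : EventuallyPeriodic a) :
    (3 : ℝ) ∈ dioSet a := by
  obtain ⟨T, hT, N, hper⟩ := hp
  intro m
  set n' := 2 * (N + T) + m + T with hn'def
  apply collision_witness a m n' N (N + T) 3 (by omega) ?_ (by omega) ?_
  · intro k hk
    have h5 := hper (N + k) (by omega)
    rw [show N + k + T = N + T + k from by omega] at h5
    exact h5.symm
  · have hj0 : (0 : ℝ) < ((N + T : ℕ) : ℝ) := by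
      have : 0 < N + T := by omega
      exact_mod_cast this
    rw [le_div_iff₀ hj0]
    have h6 : 3 * (N + T) ≤ N + T + n' := by omega
    have h6' : (3 : ℝ) * ((N + T : ℕ) : ℝ) ≤ ((N + T + n' : ℕ) : ℝ) := by exact_mod_cast h6
    push_cast at h6' ⊢
    linarith

end DioAux

/-- If the difference `p(𝐚,n) - n` is bounded, then the Diophantine exponent of `𝐚`
is greater than `2`. -/
theorem dio_gt_two_of_low_complexity {A : Type*} [Fintype A] (a : ℕ → A)
    (h : ∃ C : ℕ, ∀ n : ℕ, 1 ≤ n → wordComplexity a n ≤ n + C) :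
    (2 : EReal) < dio a := by
  classical
  obtain ⟨C, hC⟩ := h
  by_cases hep : EventuallyPeriodic a
  · have h3 : (3 : ℝ) ∈ dioSet a := DioAux.main_periodic a hep
    have hle : ((3 : ℝ) : EReal) ≤ dio a := le_sSup ⟨3, h3, rfl⟩
    refine lt_of_lt_of_le ?_ hle
    have h1 : ((2 : ℝ) : EReal) < ((3 : ℝ) : EReal) := by
      rw [EReal.coe_lt_coe_iff]; norm_num
    have h2 : ((2 : ℝ) : EReal) = (2 : EReal) := by norm_cast
    rw [h2] at h1
    exact h1
  · have h3 : ((201 : ℝ)/100) ∈ dioSet a := DioAux.main_aperiodic a C hC hep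
    obtain ⟨r, hrdef⟩ : ∃ r : ℝ, r = (201 : ℝ)/100 := ⟨_, rfl⟩
    rw [← hrdef] at h3
    have hle : (r : EReal) ≤ dio a := le_sSup ⟨r, h3, rfl⟩
    refine lt_of_lt_of_le ?_ hle
    have h1 : ((2 : ℝ) : EReal) < (r : EReal) := by
      rw [EReal.coe_lt_coe_iff, hrdef]; norm_num
    have h2 : ((2 : ℝ) : EReal) = (2 : EReal) := by norm_cast
    rw [h2] at h1
    exact h1

end
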